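/- arXiv:2511.13301 — 5 statements merged into one kernel-verified Lean document; each statement's English description precedes it below -/
import Mathlib

section
/- Let G be a graph, k a natural number, and let u, v be a nonadjacent pair of vertices of G with at least k + c common neighbors. Then for every set S of at most k vertices such that G - S is c-closed, S contains u or v. -/
def IsCClosed {V : Type*} (G : SimpleGraph V) (c : ℕ) : Prop :=
  ∀ u v : V, u ≠ v → ¬ G.Adj u v → (G.commonNeighbors u v).ncard < c

/-- If a nonadjacent pair `u, v` has at least `k + c` common neighbors, then every
vertex set `S` of size at most `k` whose deletion makes the graph `c`-closed
must contain `u` or `v`. -/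
theorem badPair_many_connecting {V : Type*} [Fintype V] (G : SimpleGraph V)
    (c k : ℕ) (u v : V) (hne : u ≠ v) (hnadj : ¬ G.Adj u v)
    (hmany : k + c ≤ (G.commonNeighbors u v).ncard)
    (S : Finset V) (hS : S.card ≤ k)
    (hclosed : IsCClosed (G.induce ((↑S : Set V)ᶜ)) c) :
    u ∈ S ∨ v ∈ S := by
  by_contra h
  push_neg at h
  obtain ⟨hu, hv⟩ := h
  have hu' : u ∈ ((↑S : Set V)ᶜ) := by simpa using hu
  have hv' : v ∈ ((↑S : Set V)ᶜ) := by simpa using hv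
  set T : Set V := G.commonNeighbors u v with hT
  have hTfin : T.Finite := Set.toFinite _
  have hlt := hclosed ⟨u, hu'⟩ ⟨v, hv'⟩ (by simpa [Subtype.ext_iff] using hne)
    (by simpa using hnadj)
  set N : Set ((↑S : Set V)ᶜ : Set V) :=
    (G.induce ((↑S : Set V)ᶜ)).commonNeighbors ⟨u, hu'⟩ ⟨v, hv'⟩ with hN
  have himg : (Subtype.val '' N) = T \ ↑S := by
    ext w
    constructor
    · rintro ⟨⟨w, hw⟩, hwN, rfl⟩
      refine ⟨⟨hwN.1, hwN.2⟩, by simpa using hw⟩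
    · rintro ⟨hwT, hwS⟩
      exact ⟨⟨w, by simpa using hwS⟩, ⟨hwT.1, hwT.2⟩, rfl⟩
  have hcard : N.ncard = (T \ ↑S).ncard := by
    rw [← himg, Set.ncard_image_of_injective _ Subtype.val_injective]
  have hsplit : (T ∩ ↑S).ncard + (T \ ↑S).ncard = T.ncard :=
    Set.ncard_inter_add_ncard_diff_eq_ncard T (↑S) hTfin
  have hinter : (T ∩ ↑S).ncard ≤ k := by
    calc (T ∩ ↑S).ncard ≤ (↑S : Set V).ncard :=
          Set.ncard_le_ncard Set.inter_subset_right (Set.toFinite _)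
      _ = S.card := by simp [Set.ncard_coe_finset]
      _ ≤ k := hS
  have : c ≤ (T \ ↑S).ncard := by omega
  rw [hcard] at hlt
  omega
end

section
/- For every natural number s ≥ 1, there exists a graph G (a clique on 2s vertices together with two extra vertices v1, v2, where v1 is adjacent to s of the clique vertices and v2 to the other s clique vertices) such that G minus {v1, v2} is 1-closed, yet every vertex of the clique has a nonneighbor with which it shares at least s common neighbors whenever s ≥ 3. -/
/-- For every `s ≥ 1` there is a graph consisting of a clique on `2s` vertices plus
two extra vertices `v₁ = inr 0`, `v₂ = inr 1`, where `v₁` is adjacent to the first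
`s` clique vertices and `v₂` to the other `s`, such that deleting `{v₁, v₂}` leaves a
`1`-closed graph, yet (for `s ≥ 3`) every clique vertex has a nonneighbor with which
it shares at least `s` common neighbors. -/
theorem exists_graph_small_deletion_large_weakClosure (s : ℕ) (hs : 1 ≤ s) :
    ∃ G : SimpleGraph (Fin (2 * s) ⊕ Fin 2),
      (∀ i j : Fin (2 * s), i ≠ j → G.Adj (Sum.inl i) (Sum.inl j)) ∧
      (∀ i : Fin (2 * s), G.Adj (Sum.inr 0) (Sum.inl i) ↔ (i : ℕ) < s) ∧
      (∀ i : Fin (2 * s), G.Adj (Sum.inr 1) (Sum.inl i) ↔ s ≤ (i : ℕ)) ∧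
      ¬ G.Adj (Sum.inr 0) (Sum.inr 1) ∧
      IsCClosed (G.induce {x : Fin (2 * s) ⊕ Fin 2 |
        x ≠ Sum.inr 0 ∧ x ≠ Sum.inr 1}) 1 ∧
      (3 ≤ s → ∀ i : Fin (2 * s), ∃ y : Fin (2 * s) ⊕ Fin 2,
        Sum.inl i ≠ y ∧ ¬ G.Adj (Sum.inl i) y ∧
        s ≤ (G.commonNeighbors (Sum.inl i) y).ncard) := by
  classical
  set r : (Fin (2 * s) ⊕ Fin 2) → (Fin (2 * s) ⊕ Fin 2) → Prop := fun x y =>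
    match x, y with
    | .inl _, .inl _ => True
    | .inr a, .inl i => (a = 0 ∧ (i : ℕ) < s) ∨ (a = 1 ∧ s ≤ (i : ℕ))
    | _, _ => False with hr
  refine ⟨SimpleGraph.fromRel r, ?_, ?_, ?_, ?_, ?_, ?_⟩
  · intro i j hij
    simp [SimpleGraph.fromRel_adj, hr, hij]
  · intro i
    simp [SimpleGraph.fromRel_adj, hr]
  · intro i
    simp [SimpleGraph.fromRel_adj, hr]
  · simp [SimpleGraph.fromRel_adj, hr]
  · rintro ⟨u, hu0, hu1⟩ ⟨v, hv0, hv1⟩ hne hnadj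
    exfalso
    apply hnadj
    obtain ⟨i, rfl⟩ : ∃ i, u = Sum.inl i := by
      rcases u with i | a
      · exact ⟨i, rfl⟩
      · fin_cases a
        · exact absurd rfl hu0
        · exact absurd rfl hu1
    obtain ⟨j, rfl⟩ : ∃ j, v = Sum.inl j := by
      rcases v with j | a
      · exact ⟨j, rfl⟩
      · fin_cases a
        · exact absurd rfl hv0
        · exact absurd rfl hv1
    have hij : i ≠ j := fun h => hne (by simp [h])
    simp [SimpleGraph.comap_adj, SimpleGraph.fromRel_adj, hr, hij]
  · intro hs3 i
    by_cases hi : (i : ℕ) < s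
    · refine ⟨Sum.inr 1, by simp, ?_, ?_⟩
      · simp [SimpleGraph.fromRel_adj, hr, hi, Nat.not_le.mpr hi]
      · -- common neighbors contain inl (s+j) for j < s
        have hsub : (fun j : Fin s => (Sum.inl ⟨s + j, by omega⟩ : Fin (2 * s) ⊕ Fin 2)) ''
            Set.univ ⊆ (SimpleGraph.fromRel r).commonNeighbors (Sum.inl i) (Sum.inr 1) := by
          rintro _ ⟨j, -, rfl⟩
          constructor
          · have : i ≠ (⟨s + j, by omega⟩ : Fin (2 * s)) := by
              intro h
              have := congrArg Fin.val h
              simp at this; omega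
            simp [SimpleGraph.fromRel_adj, hr, this]
          · simp [SimpleGraph.fromRel_adj, hr, Nat.le_add_right]
        have hinj : Function.Injective
            (fun j : Fin s => (Sum.inl ⟨s + j, by omega⟩ : Fin (2 * s) ⊕ Fin 2)) := by
          intro a b h
          simp only [Sum.inl.injEq, Fin.mk.injEq] at h
          exact Fin.ext (by omega)
        calc s = ((fun j : Fin s => (Sum.inl ⟨s + j, by omega⟩ : Fin (2 * s) ⊕ Fin 2)) ''
              Set.univ).ncard := by
              rw [Set.ncard_image_of_injective _ hinj, Set.ncard_univ]; simp
          _ ≤ _ := Set.ncard_le_ncard hsub (Set.toFinite _)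
    · push_neg at hi
      refine ⟨Sum.inr 0, by simp, ?_, ?_⟩
      · simp [SimpleGraph.fromRel_adj, hr, hi, Nat.not_lt.mpr hi]
      · have hsub : (fun j : Fin s => (Sum.inl ⟨j, by omega⟩ : Fin (2 * s) ⊕ Fin 2)) ''
            Set.univ ⊆ (SimpleGraph.fromRel r).commonNeighbors (Sum.inl i) (Sum.inr 0) := by
          rintro _ ⟨j, -, rfl⟩
          constructor
          · have : i ≠ (⟨j, by omega⟩ : Fin (2 * s)) := by
              intro h
              have := congrArg Fin.val h
              simp at this; omega
            simp [SimpleGraph.fromRel_adj, hr, this]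
          · simp [SimpleGraph.fromRel_adj, hr, j.isLt]
        have hinj : Function.Injective
            (fun j : Fin s => (Sum.inl ⟨j, by omega⟩ : Fin (2 * s) ⊕ Fin 2)) := by
          intro a b h
          simp only [Sum.inl.injEq, Fin.mk.injEq] at h
          exact Fin.ext h
        calc s = ((fun j : Fin s => (Sum.inl ⟨j, by omega⟩ : Fin (2 * s) ⊕ Fin 2)) ''
              Set.univ).ncard := by
              rw [Set.ncard_image_of_injective _ hinj, Set.ncard_univ]; simp
          _ ≤ _ := Set.ncard_le_ncard hsub (Set.toFinite _)
end

section
/- Let c ≥ 1 and let G be the graph consisting of an independent set W of size c together with two additional vertices v1 and v2, each adjacent to all vertices of W and not to each other. Then G is (c+1)-closed but not c-closed, and deleting any single vertex of G yields a c-closed graph. -/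
/-- The complete bipartite-like graph on an independent set `W` of size `c` plus two
extra vertices `v₁, v₂` (each adjacent to all of `W`, not to each other):
edges are exactly between the two sides. -/
def starPairGraph (c : ℕ) : SimpleGraph (Fin c ⊕ Fin 2) :=
  SimpleGraph.fromRel (fun a b => a.isLeft = true ∧ b.isRight = true)

lemma spg_adj_inl_inr {c : ℕ} (i : Fin c) (j : Fin 2) :
    (starPairGraph c).Adj (.inl i) (.inr j) := by simp [starPairGraph]

lemma spg_not_adj_inl_inl {c : ℕ} (i j : Fin c) :
    ¬ (starPairGraph c).Adj (.inl i) (.inl j) := by simp [starPairGraph]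

lemma spg_not_adj_inr_inr {c : ℕ} (i j : Fin 2) :
    ¬ (starPairGraph c).Adj (.inr i) (.inr j) := by simp [starPairGraph]

lemma spg_common_ll {c : ℕ} (i j : Fin c) :
    (starPairGraph c).commonNeighbors (.inl i) (.inl j) = Set.range Sum.inr := by
  ext x
  cases x with
  | inl k => simp [SimpleGraph.commonNeighbors, starPairGraph]
  | inr k => simp [SimpleGraph.commonNeighbors, starPairGraph]

lemma spg_common_rr {c : ℕ} (i j : Fin 2) :
    (starPairGraph c).commonNeighbors (.inr i) (.inr j) = Set.range Sum.inl := by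
  ext x
  cases x with
  | inl k => simp [SimpleGraph.commonNeighbors, starPairGraph]
  | inr k => simp [SimpleGraph.commonNeighbors, starPairGraph]

lemma ncard_range_inr {c : ℕ} : (Set.range (Sum.inr : Fin 2 → Fin c ⊕ Fin 2)).ncard = 2 := by
  rw [Set.ncard_eq_toFinset_card']
  simp [Finset.card_image_of_injective _ Sum.inr_injective]

lemma ncard_range_inl {c : ℕ} : (Set.range (Sum.inl : Fin c → Fin c ⊕ Fin 2)).ncard = c := by
  rw [Set.ncard_eq_toFinset_card']
  simp [Finset.card_image_of_injective _ Sum.inl_injective]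

lemma spg_induce_key {c : ℕ} (x : Fin c ⊕ Fin 2) (u v : ↥{y | y ≠ x})
    (S : Set (Fin c ⊕ Fin 2))
    (hS : ∀ w : ↥{y | y ≠ x},
      w ∈ ((starPairGraph c).induce {y | y ≠ x}).commonNeighbors u v → w.val ∈ S) :
    (((starPairGraph c).induce {y | y ≠ x}).commonNeighbors u v).ncard ≤ S.ncard := by
  rw [← Set.ncard_image_of_injective _ (Subtype.val_injective
    (p := fun y => y ∈ {y | y ≠ x}))]
  exact Set.ncard_le_ncard (by rintro _ ⟨w, hw, rfl⟩; exact hS w hw) (Set.toFinite S)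

lemma spg_mem_common {c : ℕ} (x : Fin c ⊕ Fin 2) (u v w : ↥{y | y ≠ x}) :
    w ∈ ((starPairGraph c).induce {y | y ≠ x}).commonNeighbors u v ↔
      (starPairGraph c).Adj u.val w.val ∧ (starPairGraph c).Adj v.val w.val := by
  simp [SimpleGraph.commonNeighbors]

/-- The graph `starPairGraph c` is `(c+1)`-closed but not `c`-closed, and deleting
any single vertex yields a `c`-closed graph. -/
theorem starPairGraph_closure (c : ℕ) (hc : 1 ≤ c) :
    IsCClosed (starPairGraph c) (c + 1) ∧
      ¬ IsCClosed (starPairGraph c) c ∧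
      ∀ x : Fin c ⊕ Fin 2,
        IsCClosed ((starPairGraph c).induce {y | y ≠ x}) c := by
  refine ⟨?_, ?_, ?_⟩
  · intro u v huv hadj
    match u, v with
    | .inl i, .inl j =>
        rw [spg_common_ll, ncard_range_inr]
        have hij : (i : ℕ) ≠ (j : ℕ) := fun h => huv (by rw [Fin.val_eq_val] at h; rw [h])
        have := i.isLt
        have := j.isLt
        omega
    | .inl i, .inr j => exact absurd (spg_adj_inl_inr i j) hadj
    | .inr j, .inl i => exact absurd (spg_adj_inl_inr i j).symm hadj
    | .inr i, .inr j => rw [spg_common_rr, ncard_range_inl]; omega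
  · intro h
    have := h (.inr 0) (.inr 1) (by simp) (spg_not_adj_inr_inr 0 1)
    rw [spg_common_rr, ncard_range_inl] at this
    omega
  · intro x u v huv hadj
    obtain ⟨u, hu⟩ := u
    obtain ⟨v, hv⟩ := v
    have hu' : u ≠ x := hu
    have hv' : v ≠ x := hv
    match u, v with
    | .inl i, .inl j =>
        have hij : (i : ℕ) ≠ (j : ℕ) := fun h => huv (by
          rw [Fin.val_eq_val] at h; simp [h])
        match x with
        | .inl k =>
            have hik : (i : ℕ) ≠ (k : ℕ) := fun h => hu' (by rw [Fin.val_eq_val] at h; rw [h])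
            have hjk : (j : ℕ) ≠ (k : ℕ) := fun h => hv' (by rw [Fin.val_eq_val] at h; rw [h])
            have hb := spg_induce_key (.inl k) ⟨.inl i, hu⟩ ⟨.inl j, hv⟩
              (Set.range Sum.inr) (by
                rintro ⟨w, hw⟩ hmem
                rw [spg_mem_common] at hmem
                match w with
                | .inl m => exact absurd hmem.1 (spg_not_adj_inl_inl i m)
                | .inr m => exact ⟨m, rfl⟩)
            rw [ncard_range_inr] at hb
            have := i.isLt; have := j.isLt; have := k.isLt
            omega
        | .inr k =>
            have hb := spg_induce_key (.inr k) ⟨.inl i, hu⟩ ⟨.inl j, hv⟩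
              (Set.range Sum.inr \ {Sum.inr k}) (by
                rintro ⟨w, hw⟩ hmem
                rw [spg_mem_common] at hmem
                match w with
                | .inl m => exact absurd hmem.1 (spg_not_adj_inl_inl i m)
                | .inr m => exact ⟨⟨m, rfl⟩, hw⟩)
            rw [Set.ncard_diff_singleton_of_mem (Set.mem_range_self k), ncard_range_inr] at hb
            have hik : (i : ℕ) ≠ (j : ℕ) := fun h => huv (by
              rw [Fin.val_eq_val] at h; simp [h])
            have := i.isLt; have := j.isLt
            omega
    | .inl i, .inr j => exact absurd (by simpa using spg_adj_inl_inr i j) hadj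
    | .inr j, .inl i => exact absurd (by simpa using (spg_adj_inl_inr i j).symm) hadj
    | .inr i, .inr j =>
        match x with
        | .inr k =>
            have hij : (i : ℕ) ≠ (j : ℕ) := fun h => huv (by
              rw [Fin.val_eq_val] at h; simp [h])
            have hik : (i : ℕ) ≠ (k : ℕ) := fun h => hu' (by rw [Fin.val_eq_val] at h; rw [h])
            have hjk : (j : ℕ) ≠ (k : ℕ) := fun h => hv' (by rw [Fin.val_eq_val] at h; rw [h])
            have := i.isLt; have := j.isLt; have := k.isLt
            omega
        | .inl k =>
            have hb := spg_induce_key (.inl k) ⟨.inr i, hu⟩ ⟨.inr j, hv⟩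
              (Set.range Sum.inl \ {Sum.inl k}) (by
                rintro ⟨w, hw⟩ hmem
                rw [spg_mem_common] at hmem
                match w with
                | .inr m => exact absurd hmem.1 (spg_not_adj_inr_inr i m)
                | .inl m => exact ⟨⟨m, rfl⟩, hw⟩)
            rw [Set.ncard_diff_singleton_of_mem (Set.mem_range_self k), ncard_range_inl] at hb
            omega
end

section
/- Let G be a graph, let ~ be the equivalence relation on V(G) defined by u ~ v iff N(u) \ {v} = N(v) \ {u}, and let c ≥ 2. Let S be a minimum-size vertex set such that G - S is c-closed. Then for every equivalence class D of ~, either D ∩ S = ∅ or |D \ S| < c. -/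
lemma cn_ncard {V : Type*} (G : SimpleGraph V) (t : Set V) (a b : t) :
    ((G.induce t).commonNeighbors a b).ncard
      = {z : V | z ∈ t ∧ G.Adj ↑a z ∧ G.Adj ↑b z}.ncard := by
  rw [← Set.ncard_image_of_injective _ Subtype.val_injective]
  congr 1
  ext z
  simp only [Set.mem_image, SimpleGraph.mem_commonNeighbors, SimpleGraph.mem_neighborSet,
    SimpleGraph.comap_adj, Set.mem_setOf_eq]
  constructor
  · rintro ⟨⟨z, hz⟩, ⟨h1, h2⟩, rfl⟩
    refine ⟨hz, ?_, ?_⟩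
    · have := h1; simp at this; exact this
    · have := h2; simp at this; exact this
  · rintro ⟨hz, h1, h2⟩
    exact ⟨⟨z, hz⟩, ⟨by simp [hz, h1], by simp [hz, h2]⟩, rfl⟩

/-- Let `S` be a minimum-size vertex set whose deletion makes `G` `c`-closed
(`c ≥ 2`). Then for every neighborhood class `D` (equivalence class of the relation
`u ~ v ↔ N(u) \ {v} = N(v) \ {u}`), either `S` avoids `D` entirely, or fewer than `c`
vertices of `D` survive the deletion. -/
theorem neighborhoodClass_solution_structure {V : Type*} [Fintype V]
    (G : SimpleGraph V) (c : ℕ) (hc : 2 ≤ c)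
    (S : Finset V)
    (hS : IsCClosed (G.induce ((↑S : Set V)ᶜ)) c)
    (hmin : ∀ T : Finset V,
      IsCClosed (G.induce ((↑T : Set V)ᶜ)) c → S.card ≤ T.card)
    (w : V) :
    ({v : V | G.neighborSet v \ {w} = G.neighborSet w \ {v}} ∩ ↑S = ∅) ∨
      ({v : V | G.neighborSet v \ {w} = G.neighborSet w \ {v}} \ ↑S).ncard < c := by
  classical
  set D : Set V := {v : V | G.neighborSet v \ {w} = G.neighborSet w \ {v}} with hDdef
  -- twin transfer lemma
  have twin : ∀ u v z : V, u ∈ D → v ∈ D → G.Adj u z → z ≠ v → G.Adj v z := by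
    intro u v z hu hv huz hzv
    simp only [hDdef, Set.mem_setOf_eq] at hu hv
    by_cases huv : u = v
    · exact huv ▸ huz
    by_cases hzw : z = w
    · -- w adj u, want v adj w, i.e. w ∈ N v
      have hvw : v ≠ w := fun h => hzv (by rw [hzw, h])
      have h1 : u ∈ G.neighborSet w \ {v} := ⟨(hzw ▸ huz).symm, huv⟩
      rw [← hv] at h1
      have h2 : v ∈ G.neighborSet u \ {w} := ⟨h1.1.symm, hvw⟩
      rw [hu] at h2
      rw [hzw]
      exact h2.1.symm
    · have h1 : z ∈ G.neighborSet u \ {w} := ⟨huz, hzw⟩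
      rw [hu] at h1
      have h2 : z ∈ G.neighborSet w \ {v} := ⟨h1.1, hzv⟩
      rw [← hv] at h2
      exact h2.1
  by_contra h
  push_neg at h
  obtain ⟨hne, hcard⟩ := h
  obtain ⟨s, hsD, hsS'⟩ := hne
  have hsS : s ∈ S := hsS'
  -- restatement of c-closedness of G - S at the level of V
  have hS' : ∀ a b : V, a ∉ S → b ∉ S → a ≠ b → ¬ G.Adj a b →
      ({z : V | z ∉ S ∧ G.Adj a z ∧ G.Adj b z}).ncard < c := by
    intro a b ha hb hab hnadj
    have ha' : a ∈ ((↑S : Set V)ᶜ) := by simpa using ha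
    have hb' : b ∈ ((↑S : Set V)ᶜ) := by simpa using hb
    have := hS ⟨a, ha'⟩ ⟨b, hb'⟩ (by simpa using hab) (by simpa using hnadj)
    rw [cn_ncard] at this
    convert this using 2
    rfl
  set T : Finset V := S.erase s with hTdef
  -- membership facts
  have hmemT : ∀ z : V, z ∉ T ↔ (z = s ∨ z ∉ S) := by
    intro z
    constructor
    · intro hz
      by_cases h : z = s
      · exact Or.inl h
      · exact Or.inr fun hzS => hz (Finset.mem_erase.mpr ⟨h, hzS⟩)
    · rintro (rfl | h) hmem
      · exact (Finset.mem_erase.mp hmem).1 rfl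
      · exact h (Finset.mem_erase.mp hmem).2
  -- existence of two distinct surviving twins
  have htwo : ∀ b : V, ∃ v, v ∈ D ∧ v ∉ S ∧ v ≠ b := by
    intro b
    by_contra hcon
    push_neg at hcon
    have hsub : D \ ↑S ⊆ {b} := by
      rintro v ⟨hv1, hv2⟩
      exact hcon v hv1 (by simpa using hv2)
    have := Set.ncard_le_ncard hsub (Set.finite_singleton b)
    rw [Set.ncard_singleton] at this
    omega
  -- case where one endpoint is s
  have case2 : ∀ b : V, b ∉ S → b ≠ s → ¬ G.Adj s b →
      ({z : V | z ∉ T ∧ G.Adj s z ∧ G.Adj b z}).ncard < c := by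
    intro b hbS hbs hnadj
    obtain ⟨v, hvD, hvS, hvb⟩ := htwo b
    have hvb_nadj : ¬ G.Adj v b := by
      intro hadj
      exact hnadj (twin v s b hvD hsD hadj hbs)
    have hsub : {z : V | z ∉ T ∧ G.Adj s z ∧ G.Adj b z}
        ⊆ {z : V | z ∉ S ∧ G.Adj v z ∧ G.Adj b z} := by
      rintro z ⟨hzT, hsz, hbz⟩
      have hzs : z ≠ s := fun h => G.irrefl (h ▸ hsz)
      have hzS : z ∉ S := ((hmemT z).mp hzT).resolve_left hzs
      have hzv : z ≠ v := by
        rintro rfl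
        exact hvb_nadj (hbz.symm)
      exact ⟨hzS, twin s v z hsD hvD hsz hzv, hbz⟩
    calc ({z : V | z ∉ T ∧ G.Adj s z ∧ G.Adj b z}).ncard
        ≤ ({z : V | z ∉ S ∧ G.Adj v z ∧ G.Adj b z}).ncard :=
          Set.ncard_le_ncard hsub (Set.toFinite _)
      _ < c := hS' v b hvS hbS hvb hvb_nadj
  -- the key claim: deleting T also gives a c-closed graph
  have key : ∀ a b : V, a ∉ T → b ∉ T → a ≠ b → ¬ G.Adj a b →
      ({z : V | z ∉ T ∧ G.Adj a z ∧ G.Adj b z}).ncard < c := by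
    intro a b ha hb hab hnadj
    by_cases has : a = s
    · subst has
      have hbS : b ∉ S := ((hmemT b).mp hb).resolve_left (Ne.symm hab)
      exact case2 b hbS (Ne.symm hab) hnadj
    by_cases hbs : b = s
    · rw [hbs] at hnadj ⊢
      have haS : a ∉ S := ((hmemT a).mp ha).resolve_left has
      have heq : {z : V | z ∉ T ∧ G.Adj a z ∧ G.Adj s z}
          = {z : V | z ∉ T ∧ G.Adj s z ∧ G.Adj a z} := by
        ext z
        exact ⟨fun ⟨h1, h2, h3⟩ => ⟨h1, h3, h2⟩, fun ⟨h1, h2, h3⟩ => ⟨h1, h3, h2⟩⟩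
      rw [heq]
      exact case2 a haS has (fun hadj => hnadj hadj.symm)
    -- both a, b differ from s
    have haS : a ∉ S := ((hmemT a).mp ha).resolve_left has
    have hbS : b ∉ S := ((hmemT b).mp hb).resolve_left hbs
    have hs_not : ¬ (G.Adj a s ∧ G.Adj b s) := by
      rintro ⟨hasadj, hbsadj⟩
      have hDsub : D \ ↑S ⊆ {z : V | z ∉ S ∧ G.Adj a z ∧ G.Adj b z} := by
        rintro v ⟨hvD, hvS⟩
        have hvS' : v ∉ S := by simpa using hvS
        have hva : v ≠ a := by
          rintro rfl
          exact hnadj (twin s v b hsD hvD hbsadj.symm (Ne.symm hab))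
        have hvb : v ≠ b := by
          rintro rfl
          exact hnadj (twin s v a hsD hvD hasadj.symm hab).symm
        exact ⟨hvS', (twin s v a hsD hvD hasadj.symm (Ne.symm hva)).symm,
          (twin s v b hsD hvD hbsadj.symm (Ne.symm hvb)).symm⟩
      have h1 := hS' a b haS hbS hab hnadj
      have h2 := Set.ncard_le_ncard hDsub (Set.toFinite _)
      omega
    have hsub : {z : V | z ∉ T ∧ G.Adj a z ∧ G.Adj b z}
        ⊆ {z : V | z ∉ S ∧ G.Adj a z ∧ G.Adj b z} := by
      rintro z ⟨hzT, haz, hbz⟩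
      have hzS : z ∉ S := by
        rcases (hmemT z).mp hzT with rfl | h
        · exact absurd ⟨haz, hbz⟩ hs_not
        · exact h
      exact ⟨hzS, haz, hbz⟩
    calc ({z : V | z ∉ T ∧ G.Adj a z ∧ G.Adj b z}).ncard
        ≤ ({z : V | z ∉ S ∧ G.Adj a z ∧ G.Adj b z}).ncard :=
          Set.ncard_le_ncard hsub (Set.toFinite _)
      _ < c := hS' a b haS hbS hab hnadj
  -- hence G - T is c-closed
  have hT : IsCClosed (G.induce ((↑T : Set V)ᶜ)) c := by
    rintro ⟨a, ha⟩ ⟨b, hb⟩ hab hnadj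
    rw [cn_ncard]
    have ha' : a ∉ T := by simpa using ha
    have hb' : b ∉ T := by simpa using hb
    have hab' : a ≠ b := by simpa using hab
    have hnadj' : ¬ G.Adj a b := by simpa using hnadj
    have := key a b ha' hb' hab' hnadj'
    convert this using 2
    rfl
  have := hmin T hT
  have hlt : T.card < S.card := Finset.card_erase_lt_of_mem hsS
  omega
end

section
/- Let G = (V, E) be a graph constructed from a d-Hitting Set instance (U, 𝒜) where every set in 𝒜 has size exactly d, as follows: V = U ∪ {v_A, u_A : A ∈ 𝒜}, U forms a clique, and each of v_A, u_A is adjacent exactly to the elements of A. Then for c = d: a set S ⊆ U is a hitting set for 𝒜 if and only if G - S is c-closed, where additionally G - S is c-closed implies that for every A ∈ 𝒜, S ∩ ({v_A, u_A} ∪ A) ≠ ∅. In particular, if H ⊆ U hits every set of 𝒜, then G - H is d-closed. -/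
lemma ncard_le_of_forall_inl {U W : Type*} {S : Set (U ⊕ W)} (C : Set ↥S) (T : Finset U)
    (h : ∀ z ∈ C, ∃ w ∈ T, (z : U ⊕ W) = Sum.inl w) : C.ncard ≤ T.card := by
  have h1 : Subtype.val '' C ⊆ Sum.inl '' (T : Set U) := by
    rintro _ ⟨z, hz, rfl⟩
    obtain ⟨w, hw, hzw⟩ := h z hz
    exact ⟨w, hw, hzw.symm⟩
  calc C.ncard = (Subtype.val '' C).ncard :=
        (Set.ncard_image_of_injective _ Subtype.val_injective).symm
    _ ≤ (Sum.inl '' (T : Set U)).ncard :=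
        Set.ncard_le_ncard h1 ((T : Set U).toFinite.image _)
    _ = (T : Set U).ncard := Set.ncard_image_of_injective _ Sum.inl_injective
    _ = T.card := Set.ncard_coe_finset T

/-- Correctness of the reduction from `d`-Hitting Set: in the graph `G` built from an
instance `(U, 𝒜)` with all sets of size exactly `d` — `U` is a clique, and for each
`A ∈ 𝒜` the two new vertices `v_A = (A, 0)` and `u_A = (A, 1)` are adjacent exactly
to the elements of `A` — a set `H ⊆ U` is a hitting set for `𝒜` if and only if
deleting `H` from `G` yields a `d`-closed graph. -/
theorem hittingSet_iff_dClosed {U : Type*} [Fintype U] [DecidableEq U]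
    (𝒜 : Finset (Finset U)) (d : ℕ) (hd : 1 ≤ d)
    (hsize : ∀ A ∈ 𝒜, A.card = d)
    (G : SimpleGraph (U ⊕ ({A // A ∈ 𝒜} × Fin 2)))
    (hG : ∀ x y : U ⊕ ({A // A ∈ 𝒜} × Fin 2), G.Adj x y ↔
      ((∃ u v : U, u ≠ v ∧ x = Sum.inl u ∧ y = Sum.inl v) ∨
       (∃ (u : U) (p : {A // A ∈ 𝒜} × Fin 2), u ∈ p.1.1 ∧
         ((x = Sum.inl u ∧ y = Sum.inr p) ∨ (x = Sum.inr p ∧ y = Sum.inl u)))))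
    (H : Finset U) :
    (∀ A ∈ 𝒜, ∃ u ∈ A, u ∈ H) ↔
      IsCClosed (G.induce {x : U ⊕ ({A // A ∈ 𝒜} × Fin 2) |
        ∀ u : U, x = Sum.inl u → u ∉ H}) d := by
  set S : Set (U ⊕ ({A // A ∈ 𝒜} × Fin 2)) :=
    {x | ∀ u : U, x = Sum.inl u → u ∉ H} with hS
  have adj_ll : ∀ u v : U, G.Adj (Sum.inl u) (Sum.inl v) ↔ u ≠ v := by
    intro u v
    rw [hG]
    constructor
    · rintro (⟨a, b, hab, ha, hb⟩ | ⟨a, p, _, (⟨h1, h2⟩ | ⟨h1, h2⟩)⟩) <;> simp_all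
    · intro h; exact Or.inl ⟨u, v, h, rfl, rfl⟩
  have adj_lr : ∀ (u : U) (p : {A // A ∈ 𝒜} × Fin 2),
      G.Adj (Sum.inl u) (Sum.inr p) ↔ u ∈ p.1.1 := by
    intro u p
    rw [hG]
    constructor
    · rintro (⟨a, b, hab, ha, hb⟩ | ⟨a, q, hq, (⟨h1, h2⟩ | ⟨h1, h2⟩)⟩) <;> simp_all
    · intro h; exact Or.inr ⟨u, p, h, Or.inl ⟨rfl, rfl⟩⟩
  have adj_rl : ∀ (u : U) (p : {A // A ∈ 𝒜} × Fin 2),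
      G.Adj (Sum.inr p) (Sum.inl u) ↔ u ∈ p.1.1 := by
    intro u p
    constructor
    · intro h; exact (adj_lr u p).1 h.symm
    · intro h; exact ((adj_lr u p).2 h).symm
  have adj_rr : ∀ p q : {A // A ∈ 𝒜} × Fin 2,
      ¬ G.Adj (Sum.inr p) (Sum.inr q) := by
    intro p q h
    rw [hG] at h
    rcases h with ⟨a, b, hab, ha, hb⟩ | ⟨a, r, hr, (⟨h1, h2⟩ | ⟨h1, h2⟩)⟩
    · exact nomatch ha
    · exact nomatch h1
    · exact nomatch h2
  -- common neighbors of a pair with an inr vertex lie in inl '' (A \ H)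
  have key : ∀ (x : ↥S) (p : {A // A ∈ 𝒜} × Fin 2), (x : U ⊕ _) = Sum.inr p →
      ∀ z ∈ (G.induce S).commonNeighbors x z,
      True := fun _ _ _ _ _ => trivial
  constructor
  · intro hhit
    intro x y hxy hnadj
    have hxy' : (x : U ⊕ ({A // A ∈ 𝒜} × Fin 2)) ≠ (y : U ⊕ ({A // A ∈ 𝒜} × Fin 2)) := fun h => hxy (Subtype.coe_injective h)
    obtain ⟨xv, hx⟩ := x
    obtain ⟨yv, hy⟩ := y
    simp only [SimpleGraph.comap_adj, Function.Embedding.coe_subtype] at hnadj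
    match xv, yv with
    | Sum.inl u, Sum.inl v =>
      exact absurd ((adj_ll u v).2 (fun h => hxy' (by simp [h]))) hnadj
    | Sum.inl u, Sum.inr p =>
      have hu : u ∉ p.1.1 := fun h => hnadj ((adj_lr u p).2 h)
      obtain ⟨a, haA, haH⟩ := hhit p.1.1 p.1.2
      have hT : (p.1.1 \ H).card < d := by
        rw [← hsize p.1.1 p.1.2]
        exact Finset.card_lt_card ⟨Finset.sdiff_subset, fun hsub =>
          (Finset.mem_sdiff.1 (hsub haA)).2 haH⟩
      refine lt_of_le_of_lt (ncard_le_of_forall_inl _ (p.1.1 \ H) ?_) hT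
      rintro ⟨(w | q), hz⟩ hzmem
      · rw [SimpleGraph.mem_commonNeighbors] at hzmem
        obtain ⟨h1, h2⟩ := hzmem
        simp only [SimpleGraph.comap_adj, Function.Embedding.coe_subtype] at h1 h2
        exact ⟨w, Finset.mem_sdiff.2 ⟨(adj_rl w p).1 h2, hz w rfl⟩, rfl⟩
      · rw [SimpleGraph.mem_commonNeighbors] at hzmem
        obtain ⟨h1, h2⟩ := hzmem
        simp only [SimpleGraph.comap_adj, Function.Embedding.coe_subtype] at h2
        exact absurd h2 (adj_rr p q)
    | Sum.inr p, Sum.inl u =>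
      have hu : u ∉ p.1.1 := fun h => hnadj ((adj_rl u p).2 h)
      obtain ⟨a, haA, haH⟩ := hhit p.1.1 p.1.2
      have hT : (p.1.1 \ H).card < d := by
        rw [← hsize p.1.1 p.1.2]
        exact Finset.card_lt_card ⟨Finset.sdiff_subset, fun hsub =>
          (Finset.mem_sdiff.1 (hsub haA)).2 haH⟩
      refine lt_of_le_of_lt (ncard_le_of_forall_inl _ (p.1.1 \ H) ?_) hT
      rintro ⟨(w | q), hz⟩ hzmem
      · rw [SimpleGraph.mem_commonNeighbors] at hzmem
        obtain ⟨h1, h2⟩ := hzmem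
        simp only [SimpleGraph.comap_adj, Function.Embedding.coe_subtype] at h1 h2
        exact ⟨w, Finset.mem_sdiff.2 ⟨(adj_rl w p).1 h1, hz w rfl⟩, rfl⟩
      · rw [SimpleGraph.mem_commonNeighbors] at hzmem
        obtain ⟨h1, h2⟩ := hzmem
        simp only [SimpleGraph.comap_adj, Function.Embedding.coe_subtype] at h1
        exact absurd h1 (adj_rr p q)
    | Sum.inr p, Sum.inr q =>
      have hT : ((p.1.1 ∩ q.1.1) \ H).card < d := by
        by_cases hpq : p.1 = q.1
        · obtain ⟨a, haA, haH⟩ := hhit p.1.1 p.1.2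
          rw [← hsize p.1.1 p.1.2]
          refine Finset.card_lt_card ⟨(Finset.sdiff_subset).trans Finset.inter_subset_left,
            fun hsub => ?_⟩
          have := hsub haA
          rw [Finset.mem_sdiff] at this
          exact this.2 haH
        · have hAB : p.1.1 ≠ q.1.1 := fun h => hpq (Subtype.ext h)
          rw [← hsize p.1.1 p.1.2]
          refine Finset.card_lt_card ⟨(Finset.sdiff_subset).trans Finset.inter_subset_left,
            fun hsub => ?_⟩
          have h1 : p.1.1 ⊆ q.1.1 := fun a ha => by
            have := hsub ha
            rw [Finset.mem_sdiff, Finset.mem_inter] at this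
            exact this.1.2
          exact hAB (Finset.eq_of_subset_of_card_le h1
            (by rw [hsize _ p.1.2, hsize _ q.1.2]))
      refine lt_of_le_of_lt (ncard_le_of_forall_inl _ ((p.1.1 ∩ q.1.1) \ H) ?_) hT
      rintro ⟨(w | r), hz⟩ hzmem
      · rw [SimpleGraph.mem_commonNeighbors] at hzmem
        obtain ⟨h1, h2⟩ := hzmem
        simp only [SimpleGraph.comap_adj, Function.Embedding.coe_subtype] at h1 h2
        exact ⟨w, Finset.mem_sdiff.2 ⟨Finset.mem_inter.2
          ⟨(adj_rl w p).1 h1, (adj_rl w q).1 h2⟩, hz w rfl⟩, rfl⟩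
      · rw [SimpleGraph.mem_commonNeighbors] at hzmem
        obtain ⟨h1, h2⟩ := hzmem
        simp only [SimpleGraph.comap_adj, Function.Embedding.coe_subtype] at h1
        exact absurd h1 (adj_rr p r)
  · intro hclosed A hA
    by_contra hno
    push_neg at hno
    have hAH : A \ H = A := by
      apply Finset.sdiff_eq_self_of_disjoint
      exact Finset.disjoint_left.2 fun a ha => hno a ha
    set p : {A // A ∈ 𝒜} × Fin 2 := (⟨A, hA⟩, 0) with hp
    set q : {A // A ∈ 𝒜} × Fin 2 := (⟨A, hA⟩, 1) with hq
    have hxS : (Sum.inr p : U ⊕ _) ∈ S := fun u h => by simp at h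
    have hyS : (Sum.inr q : U ⊕ _) ∈ S := fun u h => by simp at h
    have hne : (⟨Sum.inr p, hxS⟩ : ↥S) ≠ ⟨Sum.inr q, hyS⟩ := by
      simp [hp, hq]
    have hnadj : ¬ (G.induce S).Adj ⟨Sum.inr p, hxS⟩ ⟨Sum.inr q, hyS⟩ := by
      simp only [SimpleGraph.comap_adj, Function.Embedding.coe_subtype]
      exact adj_rr p q
    have hlt := hclosed _ _ hne hnadj
    have hsub : Sum.inl '' ((A \ H : Finset U) : Set U) ⊆
        Subtype.val '' ((G.induce S).commonNeighbors ⟨Sum.inr p, hxS⟩ ⟨Sum.inr q, hyS⟩) := by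
      rintro _ ⟨w, hw, rfl⟩
      rw [Finset.coe_sdiff] at hw
      obtain ⟨hwA, hwH⟩ := hw
      have hwS : (Sum.inl w : U ⊕ _) ∈ S := fun u h => by
        rw [Sum.inl.injEq] at h; subst h; exact hwH
      refine ⟨⟨Sum.inl w, hwS⟩, ?_, rfl⟩
      rw [SimpleGraph.mem_commonNeighbors]
      constructor <;>
        simp only [SimpleGraph.comap_adj, Function.Embedding.coe_subtype]
      · exact (adj_rl w p).2 hwA
      · exact (adj_rl w q).2 hwA
    have hcard : (A \ H).card ≤
        ((G.induce S).commonNeighbors ⟨Sum.inr p, hxS⟩ ⟨Sum.inr q, hyS⟩).ncard := by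
      calc (A \ H).card = (Sum.inl '' ((A \ H : Finset U) : Set U)).ncard := by
            rw [Set.ncard_image_of_injective _ Sum.inl_injective, Set.ncard_coe_finset]
        _ ≤ (Subtype.val '' _).ncard := Set.ncard_le_ncard hsub (Set.toFinite _)
        _ = _ := Set.ncard_image_of_injective _ Subtype.val_injective
    rw [hAH, hsize A hA] at hcard
    exact absurd (lt_of_le_of_lt hcard hlt) (lt_irrefl d)
end
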